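/- The algebra H_1^i defined by generators K, E, F with relations KE = -EK, KF = -FK, EF = FE, E² = 0, F² = 0, K² = 1 has dimension 8 over ℂ, with basis {e_0, e_1, e_0E, e_1E, e_0F, e_1F, e_0EF, e_1EF} where e_0 = (1+K)/2 and e_1 = (1-K)/2. -/

import Mathlib

noncomputable section


namespace Stmt5

def X (n : Fin 3) : FreeAlgebra ℂ (Fin 3) := FreeAlgebra.ι ℂ n

/-- Relations of `H_1^i`: `KE = -EK`, `KF = -FK`, `EF = FE`, `E² = 0`, `F² = 0`, `K² = 1`. -/
inductive rel : FreeAlgebra ℂ (Fin 3) → FreeAlgebra ℂ (Fin 3) → Prop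
  | ke : rel (X 0 * X 1) (-(X 1 * X 0))
  | kf : rel (X 0 * X 2) (-(X 2 * X 0))
  | ef : rel (X 1 * X 2) (X 2 * X 1)
  | e2 : rel (X 1 ^ 2) 0
  | f2 : rel (X 2 ^ 2) 0
  | k2 : rel (X 0 ^ 2) 1

/-- The algebra `H_1^i`. -/
abbrev H1 := RingQuot rel

def K : H1 := RingQuot.mkAlgHom ℂ rel (X 0)
def E : H1 := RingQuot.mkAlgHom ℂ rel (X 1)
def F : H1 := RingQuot.mkAlgHom ℂ rel (X 2)
def e0 : H1 := (2 : ℂ)⁻¹ • (1 + K)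
def e1 : H1 := (2 : ℂ)⁻¹ • (1 - K)

/-! ### Auxiliary relations in `H1` -/

lemma rKE : K * E = -(E * K) := by
  simpa [K, E, map_mul, map_neg] using RingQuot.mkAlgHom_rel ℂ rel.ke
lemma rKF : K * F = -(F * K) := by
  simpa [K, F, map_mul, map_neg] using RingQuot.mkAlgHom_rel ℂ rel.kf
lemma rFE : F * E = E * F := by
  simpa [E, F, map_mul] using (RingQuot.mkAlgHom_rel ℂ rel.ef).symm
lemma rEE : E * E = 0 := by
  simpa [E, map_pow, sq] using RingQuot.mkAlgHom_rel ℂ rel.e2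
lemma rFF : F * F = 0 := by
  simpa [F, map_pow, sq] using RingQuot.mkAlgHom_rel ℂ rel.f2
lemma rKK : K * K = 1 := by
  simpa [K, map_pow, sq] using RingQuot.mkAlgHom_rel ℂ rel.k2

lemma rEK : E * K = -(K * E) := by rw [rKE, neg_neg]
lemma rFK : F * K = -(K * F) := by rw [rKF, neg_neg]

lemma Ke0 : K * e0 = e0 := by
  rw [e0, mul_smul_comm, mul_add, mul_one, rKK, add_comm]
lemma Ke1 : K * e1 = -e1 := by
  rw [e1, mul_smul_comm, mul_sub, mul_one, rKK, ← neg_sub, smul_neg]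
lemma Ee0 : E * e0 = e1 * E := by
  rw [e0, e1, mul_smul_comm, smul_mul_assoc, mul_add, mul_one, sub_mul, one_mul,
    rEK, ← sub_eq_add_neg]
lemma Ee1 : E * e1 = e0 * E := by
  rw [e0, e1, mul_smul_comm, smul_mul_assoc, mul_sub, mul_one, add_mul, one_mul,
    rEK, sub_neg_eq_add]
lemma Fe0 : F * e0 = e1 * F := by
  rw [e0, e1, mul_smul_comm, smul_mul_assoc, mul_add, mul_one, sub_mul, one_mul,
    rFK, ← sub_eq_add_neg]
lemma Fe1 : F * e1 = e0 * F := by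
  rw [e0, e1, mul_smul_comm, smul_mul_assoc, mul_sub, mul_one, add_mul, one_mul,
    rFK, sub_neg_eq_add]

lemma e_sum : e0 + e1 = 1 := by
  rw [e0, e1, ← smul_add]
  have h : ((1 : H1) + K) + (1 - K) = (2 : ℂ) • 1 := by
    rw [two_smul]; abel
  rw [h, smul_smul]
  norm_num

/-! ### Integer matrices giving the left regular representation -/

open Matrix

def NK : Matrix (Fin 8) (Fin 8) ℤ :=
  !![0,1,0,0,0,0,0,0; 1,0,0,0,0,0,0,0; 0,0,0,1,0,0,0,0; 0,0,1,0,0,0,0,0;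
     0,0,0,0,0,1,0,0; 0,0,0,0,1,0,0,0; 0,0,0,0,0,0,0,1; 0,0,0,0,0,0,1,0]

def NE : Matrix (Fin 8) (Fin 8) ℤ :=
  !![0,0,0,0,0,0,0,0; 0,0,0,0,0,0,0,0; 1,0,0,0,0,0,0,0; 0,-1,0,0,0,0,0,0;
     0,0,0,0,0,0,0,0; 0,0,0,0,0,0,0,0; 0,0,0,0,1,0,0,0; 0,0,0,0,0,-1,0,0]

def NF : Matrix (Fin 8) (Fin 8) ℤ :=
  !![0,0,0,0,0,0,0,0; 0,0,0,0,0,0,0,0; 0,0,0,0,0,0,0,0; 0,0,0,0,0,0,0,0;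
     1,0,0,0,0,0,0,0; 0,-1,0,0,0,0,0,0; 0,0,1,0,0,0,0,0; 0,0,0,-1,0,0,0,0]

def NW : Matrix (Fin 8) (Fin 8) ℤ :=
  !![1,1,0,0,0,0,0,0; 1,-1,0,0,0,0,0,0; 0,0,1,1,0,0,0,0; 0,0,1,-1,0,0,0,0;
     0,0,0,0,1,1,0,0; 0,0,0,0,1,-1,0,0; 0,0,0,0,0,0,1,1; 0,0,0,0,0,0,1,-1]

def toC : Matrix (Fin 8) (Fin 8) ℤ →+* Matrix (Fin 8) (Fin 8) ℂ :=
  (Int.castRingHom ℂ).mapMatrix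

def MK : Matrix (Fin 8) (Fin 8) ℂ := toC NK
def ME : Matrix (Fin 8) (Fin 8) ℂ := toC NE
def MF : Matrix (Fin 8) (Fin 8) ℂ := toC NF

lemma mKE : MK * ME = -(ME * MK) := by
  rw [MK, ME, ← _root_.map_mul, ← _root_.map_mul, ← map_neg]
  exact congrArg toC (by decide)
lemma mKF : MK * MF = -(MF * MK) := by
  rw [MK, MF, ← _root_.map_mul, ← _root_.map_mul, ← map_neg]
  exact congrArg toC (by decide)
lemma mEF : ME * MF = MF * ME := by
  rw [ME, MF, ← _root_.map_mul, ← _root_.map_mul]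
  exact congrArg toC (by decide)
lemma mEE : ME * ME = 0 := by
  rw [ME, ← _root_.map_mul, ← map_zero toC]
  exact congrArg toC (by decide)
lemma mFF : MF * MF = 0 := by
  rw [MF, ← _root_.map_mul, ← map_zero toC]
  exact congrArg toC (by decide)
lemma mKK : MK * MK = 1 := by
  rw [MK, ← _root_.map_mul, ← map_one toC]
  exact congrArg toC (by decide)

def φ : FreeAlgebra ℂ (Fin 3) →ₐ[ℂ] Matrix (Fin 8) (Fin 8) ℂ :=
  FreeAlgebra.lift ℂ ![MK, ME, MF]

lemma φX0 : φ (X 0) = MK := by simp [φ, X]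
lemma φX1 : φ (X 1) = ME := by simp [φ, X]
lemma φX2 : φ (X 2) = MF := by simp [φ, X]

lemma hrel : ∀ ⦃x y⦄, rel x y → φ x = φ y := by
  intro x y h
  induction h with
  | ke => rw [_root_.map_mul, map_neg, _root_.map_mul, φX0, φX1]; exact mKE
  | kf => rw [_root_.map_mul, map_neg, _root_.map_mul, φX0, φX2]; exact mKF
  | ef => rw [_root_.map_mul, _root_.map_mul, φX1, φX2]; exact mEF
  | e2 => rw [map_pow, map_zero, φX1, sq]; exact mEE
  | f2 => rw [map_pow, map_zero, φX2, sq]; exact mFF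
  | k2 => rw [map_pow, _root_.map_one, φX0, sq]; exact mKK

def ψ : H1 →ₐ[ℂ] Matrix (Fin 8) (Fin 8) ℂ := RingQuot.liftAlgHom ℂ ⟨φ, hrel⟩

lemma ψK : ψ K = MK := by rw [K, ψ, RingQuot.liftAlgHom_mkAlgHom_apply]; exact φX0
lemma ψE : ψ E = ME := by rw [E, ψ, RingQuot.liftAlgHom_mkAlgHom_apply]; exact φX1
lemma ψF : ψ F = MF := by rw [F, ψ, RingQuot.liftAlgHom_mkAlgHom_apply]; exact φX2

lemma ψe0 : ψ e0 = (2 : ℂ)⁻¹ • toC (1 + NK) := by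
  rw [e0, _root_.map_smul, map_add, _root_.map_one, map_add, _root_.map_one, ψK, MK]
lemma ψe1 : ψ e1 = (2 : ℂ)⁻¹ • toC (1 - NK) := by
  rw [e1, _root_.map_smul, map_sub, _root_.map_one, map_sub, _root_.map_one, ψK, MK]

/-- The vector of claimed basis elements. -/
def v : Fin 8 → H1 :=
  ![e0, e1, e0 * E, e1 * E, e0 * F, e1 * F, e0 * (E * F), e1 * (E * F)]

def A : Fin 8 → Matrix (Fin 8) (Fin 8) ℤ :=
  ![1 + NK, 1 - NK, (1 + NK) * NE, (1 - NK) * NE, (1 + NK) * NF, (1 - NK) * NF,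
    (1 + NK) * (NE * NF), (1 - NK) * (NE * NF)]

lemma ψv : ∀ i, ψ (v i) = (2 : ℂ)⁻¹ • toC (A i) := by
  intro i
  fin_cases i
  · exact ψe0
  · exact ψe1
  · show ψ (e0 * E) = (2 : ℂ)⁻¹ • toC ((1 + NK) * NE)
    rw [_root_.map_mul, ψe0, ψE, smul_mul_assoc, ME, ← _root_.map_mul]
  · show ψ (e1 * E) = (2 : ℂ)⁻¹ • toC ((1 - NK) * NE)
    rw [_root_.map_mul, ψe1, ψE, smul_mul_assoc, ME, ← _root_.map_mul]
  · show ψ (e0 * F) = (2 : ℂ)⁻¹ • toC ((1 + NK) * NF)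
    rw [_root_.map_mul, ψe0, ψF, smul_mul_assoc, MF, ← _root_.map_mul]
  · show ψ (e1 * F) = (2 : ℂ)⁻¹ • toC ((1 - NK) * NF)
    rw [_root_.map_mul, ψe1, ψF, smul_mul_assoc, MF, ← _root_.map_mul]
  · show ψ (e0 * (E * F)) = (2 : ℂ)⁻¹ • toC ((1 + NK) * (NE * NF))
    rw [_root_.map_mul, _root_.map_mul, ψe0, ψE, ψF, smul_mul_assoc, ME, MF,
      ← _root_.map_mul, ← _root_.map_mul]
  · show ψ (e1 * (E * F)) = (2 : ℂ)⁻¹ • toC ((1 - NK) * (NE * NF))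
    rw [_root_.map_mul, _root_.map_mul, ψe1, ψE, ψF, smul_mul_assoc, ME, MF,
      ← _root_.map_mul, ← _root_.map_mul]

def W : Matrix (Fin 8) (Fin 8) ℂ := (2 : ℂ)⁻¹ • toC NW

lemma W_isUnit : IsUnit W := by
  have h2 : NW * NW = (2 : Matrix (Fin 8) (Fin 8) ℤ) := by decide
  have hmul : W * toC NW = 1 := by
    rw [W, smul_mul_assoc, ← _root_.map_mul, h2]
    have : toC (2 : Matrix (Fin 8) (Fin 8) ℤ) = (2 : Matrix (Fin 8) (Fin 8) ℂ) := by
      rw [show (2 : Matrix (Fin 8) (Fin 8) ℤ) = 1 + 1 from one_add_one_eq_two.symm,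
        _root_.map_add, _root_.map_one, one_add_one_eq_two]
    rw [this, show (2 : Matrix (Fin 8) (Fin 8) ℂ) = (2 : ℂ) • 1 by
      rw [two_smul]; exact (one_add_one_eq_two).symm, smul_smul]
    norm_num
  have := invertibleOfRightInverse W (toC NW) hmul
  exact isUnit_of_invertible W

def T : H1 →ₗ[ℂ] (Fin 8 → ℂ) where
  toFun x := fun j => ψ x j 0
  map_add' x y := by funext j; show ψ (x + y) j 0 = _; rw [_root_.map_add]; rfl
  map_smul' c x := by funext j; show ψ (c • x) j 0 = _; rw [_root_.map_smul]; rfl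

lemma hA : ∀ i j, (A i) j 0 = NW i j := by
  intro i j; fin_cases i <;> fin_cases j <;> decide

lemma Tv' : ∀ i, T (v i) = W i := by
  intro i
  funext j
  have h1 : T (v i) j = ((2 : ℂ)⁻¹ • toC (A i) : Matrix (Fin 8) (Fin 8) ℂ) j 0 := by
    show ψ (v i) j 0 = _
    rw [ψv i]
  rw [h1]
  show (2 : ℂ)⁻¹ * ((A i j 0 : ℤ) : ℂ) = (2 : ℂ)⁻¹ * ((NW i j : ℤ) : ℂ)
  rw [hA i j]

lemma v_li : LinearIndependent ℂ v := by
  apply LinearIndependent.of_comp T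
  have : T ∘ v = fun i => W i := funext fun i => Tv' i
  rw [this]
  exact Matrix.linearIndependent_rows_iff_isUnit.mpr W_isUnit

/-! ### Spanning -/

def S : Submodule ℂ H1 := Submodule.span ℂ (Set.range v)

lemma hv (i : Fin 8) : v i ∈ S := Submodule.subset_span ⟨i, rfl⟩

lemma mulK : ∀ s ∈ S, K * s ∈ S := by
  intro s hs
  have hle : S ≤ Submodule.comap (LinearMap.mulLeft ℂ K) S := by
    rw [S, Submodule.span_le]
    rintro x ⟨i, rfl⟩
    show K * v i ∈ S
    fin_cases i
    · show K * (e0) ∈ S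
      rw [Ke0]; exact hv 0
    · show K * (e1) ∈ S
      rw [Ke1]; exact S.neg_mem (hv 1)
    · show K * (e0 * E) ∈ S
      rw [← mul_assoc, Ke0]; exact hv 2
    · show K * (e1 * E) ∈ S
      rw [← mul_assoc, Ke1]
      exact (neg_mul e1 (E)).symm ▸ S.neg_mem (hv 3)
    · show K * (e0 * F) ∈ S
      rw [← mul_assoc, Ke0]; exact hv 4
    · show K * (e1 * F) ∈ S
      rw [← mul_assoc, Ke1]
      exact (neg_mul e1 (F)).symm ▸ S.neg_mem (hv 5)
    · show K * (e0 * (E * F)) ∈ S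
      rw [← mul_assoc, Ke0]; exact hv 6
    · show K * (e1 * (E * F)) ∈ S
      rw [← mul_assoc, Ke1]
      exact (neg_mul e1 (E * F)).symm ▸ S.neg_mem (hv 7)
  exact hle hs

lemma mulE : ∀ s ∈ S, E * s ∈ S := by
  intro s hs
  have hle : S ≤ Submodule.comap (LinearMap.mulLeft ℂ E) S := by
    rw [S, Submodule.span_le]
    rintro x ⟨i, rfl⟩
    show E * v i ∈ S
    fin_cases i
    · show E * (e0) ∈ S
      rw [Ee0]; exact hv 3
    · show E * (e1) ∈ S
      rw [Ee1]; exact hv 2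
    · show E * (e0 * E) ∈ S
      rw [← mul_assoc, Ee0, mul_assoc, rEE, mul_zero]
      exact S.zero_mem
    · show E * (e1 * E) ∈ S
      rw [← mul_assoc, Ee1, mul_assoc, rEE, mul_zero]
      exact S.zero_mem
    · show E * (e0 * F) ∈ S
      rw [← mul_assoc, Ee0, mul_assoc]; exact hv 7
    · show E * (e1 * F) ∈ S
      rw [← mul_assoc, Ee1, mul_assoc]; exact hv 6
    · show E * (e0 * (E * F)) ∈ S
      rw [← mul_assoc, Ee0, mul_assoc, ← mul_assoc E E F,
        rEE, zero_mul, mul_zero]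
      exact S.zero_mem
    · show E * (e1 * (E * F)) ∈ S
      rw [← mul_assoc, Ee1, mul_assoc, ← mul_assoc E E F,
        rEE, zero_mul, mul_zero]
      exact S.zero_mem
  exact hle hs

lemma mulF : ∀ s ∈ S, F * s ∈ S := by
  intro s hs
  have hle : S ≤ Submodule.comap (LinearMap.mulLeft ℂ F) S := by
    rw [S, Submodule.span_le]
    rintro x ⟨i, rfl⟩
    show F * v i ∈ S
    fin_cases i
    · show F * (e0) ∈ S
      rw [Fe0]; exact hv 5
    · show F * (e1) ∈ S
      rw [Fe1]; exact hv 4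
    · show F * (e0 * E) ∈ S
      rw [← mul_assoc, Fe0, mul_assoc, rFE]; exact hv 7
    · show F * (e1 * E) ∈ S
      rw [← mul_assoc, Fe1, mul_assoc, rFE]; exact hv 6
    · show F * (e0 * F) ∈ S
      rw [← mul_assoc, Fe0, mul_assoc, rFF, mul_zero]
      exact S.zero_mem
    · show F * (e1 * F) ∈ S
      rw [← mul_assoc, Fe1, mul_assoc, rFF, mul_zero]
      exact S.zero_mem
    · show F * (e0 * (E * F)) ∈ S
      rw [← mul_assoc, Fe0, mul_assoc, ← mul_assoc F E F,
        rFE, mul_assoc E F F, rFF, mul_zero, mul_zero]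
      exact S.zero_mem
    · show F * (e1 * (E * F)) ∈ S
      rw [← mul_assoc, Fe1, mul_assoc, ← mul_assoc F E F,
        rFE, mul_assoc E F F, rFF, mul_zero, mul_zero]
      exact S.zero_mem
  exact hle hs

lemma S_top : S = ⊤ := by
  rw [eq_top_iff]
  intro x _
  obtain ⟨a, rfl⟩ := RingQuot.mkAlgHom_surjective ℂ rel x
  have one_mem : (1 : H1) ∈ S := e_sum ▸ S.add_mem (hv 0) (hv 1)
  have key : ∀ a : FreeAlgebra ℂ (Fin 3), ∀ s ∈ S, RingQuot.mkAlgHom ℂ rel a * s ∈ S := by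
    intro a
    induction a using FreeAlgebra.induction with
    | grade0 r =>
      intro s hs
      rw [AlgHom.commutes, ← Algebra.smul_def]
      exact S.smul_mem r hs
    | grade1 i =>
      fin_cases i
      · exact mulK
      · exact mulE
      · exact mulF
    | mul a b ha hb =>
      intro s hs
      rw [_root_.map_mul, mul_assoc]
      exact ha _ (hb s hs)
    | add a b ha hb =>
      intro s hs
      rw [map_add, add_mul]
      exact S.add_mem (ha s hs) (hb s hs)
  simpa using key a 1 one_mem

/-- `H_1^i` is 8-dimensional over `ℂ`, with basis
`{e₀, e₁, e₀E, e₁E, e₀F, e₁F, e₀EF, e₁EF}`. -/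
theorem dim_eight :
    (∃ b : Module.Basis (Fin 8) ℂ H1,
      ⇑b = ![e0, e1, e0 * E, e1 * E, e0 * F, e1 * F, e0 * (E * F), e1 * (E * F)]) ∧
    Module.finrank ℂ H1 = 8 := by
  have hsp : ⊤ ≤ Submodule.span ℂ (Set.range v) := by rw [← S, S_top]
  let b : Module.Basis (Fin 8) ℂ H1 := Module.Basis.mk v_li hsp
  have hb : ⇑b = v := Module.Basis.coe_mk _ _
  constructor
  · exact ⟨b, hb⟩
  · rw [Module.finrank_eq_card_basis b, Fintype.card_fin]

end Stmt5
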